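/- CBC construction bound: let f ∈ 𝔽₂[x] be irreducible of degree m, and suppose g* = (g_1*, ..., g_s*) is constructed component-by-component: g_1* = 1, and for d = 2,...,s, g_d* ∈ G_m minimizes B_γ((g_1*,...,g_{d-1}*, g), f) over g ∈ G_m. Then for all d ∈ {1,...,s}: B_γ((g_1*,...,g_d*), f) ≤ 2^{-m} Σ_{∅ ≠ u ⊆ [d]} γ_u (m/2)^{|u|} ∏_{i∈u}(b_i - a_i). -/

import Mathlib

open scoped Classical

/-- identification of a natural number with a polynomial over `𝔽₂` via its binary digits. -/
noncomputable def natToPoly (n : ℕ) : Polynomial (ZMod 2) :=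
  ∑ i ∈ Finset.range (Nat.size n), if Nat.testBit n i then Polynomial.X ^ i else 0

/-- `μ(k)`, the length of the binary expansion of `k`. -/
def mu (k : ℕ) : ℕ := Nat.size k

/-- the figure-of-merit `B_γ((g_1,…,g_d), f)` for the first `d` components of `g`
(with `[d]` realized as `{0, …, d-1}`). -/
noncomputable def BcritN (m : ℕ) (γ : Finset ℕ → ℝ) (a b : ℕ → ℝ)
    (f : Polynomial (ZMod 2)) (d : ℕ) (g : ℕ → ℕ) : ℝ :=
  ∑ u ∈ (Finset.range d).powerset.filter (fun u => u.Nonempty),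
    γ u * (∏ i ∈ u, (b i - a i)) *
      ∑ k ∈ u.pi fun _ => Finset.Icc 1 (2 ^ m - 1),
        if f ∣ ∑ i ∈ u.attach, natToPoly (g i.1) * natToPoly (k i.1 i.2) then
          (1 : ℝ) / 2 ^ (∑ i ∈ u.attach, mu (k i.1 i.2))
        else 0

lemma natToPoly_coeff (n j : ℕ) :
    (natToPoly n).coeff j = if n.testBit j then 1 else 0 := by
  unfold natToPoly
  rw [Polynomial.finset_sum_coeff]
  by_cases hj : j < Nat.size n
  · rw [Finset.sum_eq_single j]
    · by_cases h : n.testBit j <;> simp [h]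
    · intro i hi hne
      by_cases h : n.testBit i <;> simp [h, Polynomial.coeff_X_pow, Ne.symm hne]
    · intro h; exact absurd (Finset.mem_range.mpr hj) h
  · have hb : n.testBit j = false := by
      apply Nat.testBit_lt_two_pow
      exact lt_of_lt_of_le (Nat.lt_size_self n) (Nat.pow_le_pow_right (by norm_num) (not_lt.mp hj))
    simp only [hb, Bool.false_eq_true, if_false]
    apply Finset.sum_eq_zero
    intro i hi
    have hne : i ≠ j := fun h => hj (h ▸ Finset.mem_range.mp hi)
    by_cases h : n.testBit i <;> simp [h, Polynomial.coeff_X_pow, Ne.symm hne]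

lemma natToPoly_inj : Function.Injective natToPoly := by
  intro n k h
  apply Nat.eq_of_testBit_eq
  intro i
  have := congrArg (fun p => Polynomial.coeff p i) h
  simp only [natToPoly_coeff] at this
  by_cases h1 : n.testBit i <;> by_cases h2 : k.testBit i <;>
    simp_all

lemma natToPoly_zero : natToPoly 0 = 0 := by
  unfold natToPoly; simp

lemma natToPoly_ne_zero {n : ℕ} (hn : n ≠ 0) : natToPoly n ≠ 0 := by
  intro h
  exact hn (natToPoly_inj (h.trans natToPoly_zero.symm))

lemma natToPoly_degree_lt {n m : ℕ} (hn : n < 2 ^ m) :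
    (natToPoly n).degree < (m : WithBot ℕ) := by
  rw [Polynomial.degree_lt_iff_coeff_zero]
  intro j hj
  rw [natToPoly_coeff]
  have : n.testBit j = false := by
    apply Nat.testBit_lt_two_pow
    calc n < 2 ^ m := hn
      _ ≤ 2 ^ j := Nat.pow_le_pow_right (by norm_num) (by exact_mod_cast Nat.cast_le.mp hj)
  simp [this]

noncomputable def polyToNat (p : Polynomial (ZMod 2)) (m : ℕ) : ℕ :=
  ∑ i ∈ Finset.range m, 2 ^ i * (p.coeff i).val

lemma polyToNat_lt (p : Polynomial (ZMod 2)) (m : ℕ) : polyToNat p m < 2 ^ m := by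
  unfold polyToNat
  calc ∑ i ∈ Finset.range m, 2 ^ i * (p.coeff i).val
      ≤ ∑ i ∈ Finset.range m, 2 ^ i * 1 := by
        apply Finset.sum_le_sum
        intro i _
        exact Nat.mul_le_mul_left _ (Nat.le_of_lt_succ (ZMod.val_lt _))
    _ = 2 ^ m - 1 := by
        simp only [mul_one]
        induction m with
        | zero => simp
        | succ n ih => rw [Finset.sum_range_succ, ih]; have := Nat.one_le_two_pow (n := n); omega
    _ < 2 ^ m := by have := Nat.one_le_two_pow (n := m); omega

lemma zmod2_val_eq_one (x : ZMod 2) : x.val = 1 ↔ x = 1 := by revert x; decide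

lemma polyToNat_testBit (p : Polynomial (ZMod 2)) (m : ℕ) :
    ∀ j < m, (polyToNat p m).testBit j = decide (p.coeff j = 1) := by
  induction m with
  | zero => intro j hj; omega
  | succ n ih =>
    intro j hj
    have hrw : polyToNat p (n + 1) = 2 ^ n * (p.coeff n).val + polyToNat p n := by
      unfold polyToNat; rw [Finset.sum_range_succ]; ring
    rw [hrw, Nat.testBit_two_pow_mul_add _ (polyToNat_lt p n)]
    rcases lt_or_ge j n with h | h
    · rw [if_pos h, ih j h]
    · have hj : j = n := by omega
      subst hj
      rw [if_neg (lt_irrefl _), Nat.sub_self, Nat.testBit_zero]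
      have hv : (p.coeff j).val < 2 := ZMod.val_lt _
      have := zmod2_val_eq_one (p.coeff j)
      rcases (by omega : (p.coeff j).val = 0 ∨ (p.coeff j).val = 1) with h0 | h1 <;> simp_all

lemma natToPoly_polyToNat {p : Polynomial (ZMod 2)} {m : ℕ} (hp : p.degree < (m : WithBot ℕ)) :
    natToPoly (polyToNat p m) = p := by
  ext j
  rw [natToPoly_coeff]
  rcases lt_or_ge j m with h | h
  · rw [polyToNat_testBit p m j h]
    have hv : (p.coeff j).val < 2 := ZMod.val_lt _
    have h1 := zmod2_val_eq_one (p.coeff j)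
    have h0 : (p.coeff j).val = 0 ↔ p.coeff j = 0 := ZMod.val_eq_zero _
    rcases (by omega : (p.coeff j).val = 0 ∨ (p.coeff j).val = 1) with hh | hh <;> simp_all
  · have hb : (polyToNat p m).testBit j = false := by
      apply Nat.testBit_lt_two_pow
      exact lt_of_lt_of_le (polyToNat_lt p m) (Nat.pow_le_pow_right (by norm_num) h)
    have hc : p.coeff j = 0 := by
      apply Polynomial.coeff_eq_zero_of_degree_lt
      exact lt_of_lt_of_le hp (by exact_mod_cast Nat.cast_le.mpr h)
    simp [hb, hc]

lemma zmod2_eq_one_of_ne_zero {x : ZMod 2} (h : x ≠ 0) : x = 1 := by revert x; decide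

section Count
variable {m : ℕ} {f : Polynomial (ZMod 2)}

lemma f_monic (hf : Irreducible f) : f.Monic :=
  zmod2_eq_one_of_ne_zero (Polynomial.leadingCoeff_ne_zero.mpr hf.ne_zero)

lemma f_degree (hf : Irreducible f) (hdeg : f.natDegree = m) : f.degree = (m : WithBot ℕ) := by
  rw [Polynomial.degree_eq_natDegree hf.ne_zero, hdeg]

lemma not_dvd_small (hf : Irreducible f) (hdeg : f.natDegree = m) {c : Polynomial (ZMod 2)}
    (hc : c ≠ 0) (hcd : c.degree < (m : WithBot ℕ)) : ¬ f ∣ c := by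
  intro h
  exact hc (Polynomial.eq_zero_of_dvd_of_degree_lt h (by rw [f_degree hf hdeg]; exact hcd))

lemma exists_unique_solution (hf : Irreducible f) (hdeg : f.natDegree = m)
    (A c : Polynomial (ZMod 2)) (hc : c ≠ 0) (hcd : c.degree < (m : WithBot ℕ)) :
    ∃ g0 ∈ Finset.range (2 ^ m),
      ∀ g' ∈ Finset.range (2 ^ m), (f ∣ A + natToPoly g' * c ↔ g' = g0) := by
  have hprime : Prime f := irreducible_iff_prime.mp hf
  have hndvd : ¬ f ∣ c := not_dvd_small hf hdeg hc hcd
  -- coprimality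
  have hcop : IsCoprime c f :=
    ((Irreducible.coprime_iff_not_dvd hf).mpr hndvd).symm
  obtain ⟨u, v, huv⟩ := hcop
  set w0 : Polynomial (ZMod 2) := -A * u with hw0
  have hdvd0 : f ∣ A + w0 * c := by
    have : A + w0 * c = A * (1 - u * c) := by rw [hw0]; ring
    rw [this]
    have : (1 : Polynomial (ZMod 2)) - u * c = v * f := by
      rw [← huv]; ring
    rw [this]
    exact ⟨A * v, by ring⟩
  set w : Polynomial (ZMod 2) := w0 %ₘ f with hw
  have hwdeg : w.degree < (m : WithBot ℕ) := by
    rw [← f_degree hf hdeg]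
    exact Polynomial.degree_modByMonic_lt _ (f_monic hf)
  have hfw : f ∣ w0 - w := by
    rw [hw, Polynomial.modByMonic_eq_sub_mul_div _ f]
    exact ⟨w0 /ₘ f, by ring⟩
  have hdvdw : f ∣ A + w * c := by
    have : A + w * c = (A + w0 * c) - (w0 - w) * c := by ring
    rw [this]
    exact dvd_sub hdvd0 (hfw.mul_right c)
  refine ⟨polyToNat w m, Finset.mem_range.mpr (polyToNat_lt _ _), ?_⟩
  intro g' hg'
  have hpg0 : natToPoly (polyToNat w m) = w := natToPoly_polyToNat hwdeg
  constructor
  · intro hdvd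
    have hdiff : f ∣ (natToPoly g' - w) * c := by
      have : (natToPoly g' - w) * c = (A + natToPoly g' * c) - (A + w * c) := by ring
      rw [this]
      exact dvd_sub hdvd hdvdw
    have h2 : f ∣ natToPoly g' - w := (hprime.dvd_mul.mp hdiff).resolve_right hndvd
    have h3 : natToPoly g' - w = 0 := by
      apply Polynomial.eq_zero_of_dvd_of_degree_lt h2
      rw [f_degree hf hdeg]
      exact lt_of_le_of_lt (Polynomial.degree_sub_le _ _)
        (max_lt (natToPoly_degree_lt (Finset.mem_range.mp hg')) hwdeg)
    have h4 : natToPoly g' = w := by linear_combination (norm := ring_nf) h3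
    exact natToPoly_inj (h4.trans hpg0.symm)
  · rintro rfl
    rw [hpg0]
    exact hdvdw

end Count

lemma Icc_eq_Ico (m : ℕ) : Finset.Icc 1 (2 ^ m - 1) = Finset.Ico 1 (2 ^ m) := by
  have h : 2 ^ m - 1 + 1 = 2 ^ m := by have := Nat.one_le_two_pow (n := m); omega
  rw [← Finset.Ico_add_one_right_eq_Icc]; congr 1

lemma sum_mu (m : ℕ) : ∑ k ∈ Finset.Icc 1 (2 ^ m - 1), (1 : ℝ) / 2 ^ (Nat.size k) = m / 2 := by
  rw [Icc_eq_Ico]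
  induction m with
  | zero => simp
  | succ n ih =>
    rw [← Finset.sum_Ico_consecutive _ (Nat.one_le_two_pow) (Nat.pow_le_pow_right (by norm_num) (Nat.le_succ n)), ih]
    have h2 : ∑ k ∈ Finset.Ico (2 ^ n) (2 ^ (n + 1)), (1 : ℝ) / 2 ^ (Nat.size k)
        = ∑ k ∈ Finset.Ico (2 ^ n) (2 ^ (n + 1)), (1 : ℝ) / 2 ^ (n + 1) := by
      apply Finset.sum_congr rfl
      intro k hk
      obtain ⟨h1, h2⟩ := Finset.mem_Ico.mp hk
      have hsz : Nat.size k = n + 1 := by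
        have hle : Nat.size k ≤ n + 1 := Nat.size_le.mpr h2
        have hgt : n < Nat.size k := Nat.lt_size.mpr h1
        omega
      rw [hsz]
    rw [h2, Finset.sum_const, Nat.card_Ico]
    have hcard : 2 ^ (n + 1) - 2 ^ n = 2 ^ n := by
      rw [pow_succ]; omega
    rw [hcard]
    push_cast
    rw [pow_succ]
    field_simp
    ring_nf; rw [inv_pow, inv_mul_cancel₀ (by positivity)]; ring

lemma natToPoly_one : natToPoly 1 = 1 := by
  unfold natToPoly
  norm_num [Nat.size_one]


lemma Bcrit_one (m : ℕ) (γ : Finset ℕ → ℝ) (a b : ℕ → ℝ) (f : Polynomial (ZMod 2))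
    (hf : Irreducible f) (hdeg : f.natDegree = m) (g : ℕ → ℕ) (hg0 : g 0 = 1) :
    BcritN m γ a b f 1 g = 0 := by
  unfold BcritN
  apply Finset.sum_eq_zero
  intro u hu
  simp only [Finset.mem_filter, Finset.mem_powerset, Finset.range_one] at hu
  obtain ⟨hsub, hne⟩ := hu
  have hu0 : u = {0} := (Finset.Nonempty.subset_singleton_iff hne).mp hsub
  subst hu0
  rw [mul_eq_zero]
  right
  apply Finset.sum_eq_zero
  intro k hk
  rw [if_neg]
  have hmem : k 0 (Finset.mem_singleton_self 0) ∈ Finset.Icc 1 (2 ^ m - 1) :=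
    Finset.mem_pi.mp hk 0 _
  obtain ⟨h1, h2⟩ := Finset.mem_Icc.mp hmem
  set k0 := k 0 (Finset.mem_singleton_self 0) with hk0
  have hsum : ∑ i ∈ ({0} : Finset ℕ).attach, natToPoly (g i.1) * natToPoly (k i.1 i.2)
      = natToPoly (g 0) * natToPoly k0 := by
    rw [Finset.sum_eq_single_of_mem ⟨0, Finset.mem_singleton_self 0⟩ (Finset.mem_attach _ _)]
    intro i _ hne'
    exact absurd (Subtype.ext (Finset.mem_singleton.mp i.2)) hne'
  rw [hsum, hg0, natToPoly_one, one_mul]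
  apply not_dvd_small hf hdeg (natToPoly_ne_zero (by omega))
  apply natToPoly_degree_lt
  have := Nat.one_le_two_pow (n := m)
  omega

lemma filter_not_mem (d : ℕ) :
    ((Finset.range (d + 1)).powerset.filter (fun u => u.Nonempty)).filter (fun u => d ∉ u)
      = (Finset.range d).powerset.filter (fun u => u.Nonempty) := by
  ext u
  simp only [Finset.mem_filter, Finset.mem_powerset]
  constructor
  · rintro ⟨⟨hsub, hne⟩, hd⟩
    refine ⟨fun x hx => ?_, hne⟩
    have := Finset.mem_range.mp (hsub hx)
    have : x ≠ d := fun h => hd (h ▸ hx)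
    exact Finset.mem_range.mpr (by omega)
  · rintro ⟨hsub, hne⟩
    exact ⟨⟨hsub.trans (Finset.range_subset_range.mpr (Nat.le_succ d)), hne⟩,
      fun hd => by have := Finset.mem_range.mp (hsub hd); omega⟩

noncomputable def innerS (m : ℕ) (f : Polynomial (ZMod 2)) (u : Finset ℕ) (g : ℕ → ℕ) : ℝ :=
  ∑ k ∈ u.pi fun _ => Finset.Icc 1 (2 ^ m - 1),
    if f ∣ ∑ i ∈ u.attach, natToPoly (g i.1) * natToPoly (k i.1 i.2) then
      (1 : ℝ) / 2 ^ (∑ i ∈ u.attach, mu (k i.1 i.2))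
    else 0

lemma BcritN_eq (m : ℕ) (γ : Finset ℕ → ℝ) (a b : ℕ → ℝ) (f : Polynomial (ZMod 2))
    (d : ℕ) (g : ℕ → ℕ) :
    BcritN m γ a b f d g =
      ∑ u ∈ (Finset.range d).powerset.filter (fun u => u.Nonempty),
        γ u * (∏ i ∈ u, (b i - a i)) * innerS m f u g := rfl

lemma innerS_update (m : ℕ) (f : Polynomial (ZMod 2)) (u : Finset ℕ) (g : ℕ → ℕ)
    (d g' : ℕ) (hd : d ∉ u) :
    innerS m f u (Function.update g d g') = innerS m f u g := by
  unfold innerS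
  apply Finset.sum_congr rfl
  intro k _
  rw [Finset.sum_congr rfl (g := fun i : {x // x ∈ u} => natToPoly (g i.1) * natToPoly (k i.1 i.2))]
  intro i _
  have : i.1 ≠ d := fun h => hd (h ▸ i.2)
  rw [Function.update_of_ne this]

lemma avg_lemma {m : ℕ} {f : Polynomial (ZMod 2)} (hf : Irreducible f)
    (hdeg : f.natDegree = m) (u : Finset ℕ) (d : ℕ) (hd : d ∈ u) (g : ℕ → ℕ) :
    ∑ g' ∈ Finset.range (2 ^ m), innerS m f u (Function.update g d g')
      = ((m : ℝ) / 2) ^ u.card := by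
  unfold innerS
  rw [Finset.sum_comm]
  have key : ∀ k ∈ u.pi fun _ => Finset.Icc 1 (2 ^ m - 1),
      (∑ g' ∈ Finset.range (2 ^ m),
        if f ∣ ∑ i ∈ u.attach, natToPoly (Function.update g d g' i.1) * natToPoly (k i.1 i.2)
        then (1 : ℝ) / 2 ^ (∑ i ∈ u.attach, mu (k i.1 i.2)) else 0)
      = ∏ i ∈ u.attach, (1 : ℝ) / 2 ^ (mu (k i.1 i.2)) := by
    intro k hk
    set e : {x // x ∈ u} := ⟨d, hd⟩ with he
    set A : Polynomial (ZMod 2) :=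
      ∑ i ∈ u.attach.erase e, natToPoly (g i.1) * natToPoly (k i.1 i.2) with hA
    set c : Polynomial (ZMod 2) := natToPoly (k d hd) with hc
    have hkd : k d hd ∈ Finset.Icc 1 (2 ^ m - 1) := Finset.mem_pi.mp hk d hd
    obtain ⟨hk1, hk2⟩ := Finset.mem_Icc.mp hkd
    have hc0 : c ≠ 0 := natToPoly_ne_zero (by omega)
    have hcd : c.degree < (m : WithBot ℕ) := natToPoly_degree_lt
      (by have := Nat.one_le_two_pow (n := m); omega)
    have hsplit : ∀ g' : ℕ,
        ∑ i ∈ u.attach, natToPoly (Function.update g d g' i.1) * natToPoly (k i.1 i.2)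
          = A + natToPoly g' * c := by
      intro g'
      rw [← Finset.sum_erase_add _ _ (Finset.mem_attach u e)]
      refine congrArg₂ (· + ·) ?_ ?_
      · apply Finset.sum_congr rfl
        intro i hi
        have hne : i.1 ≠ d := by
          intro h
          exact (Finset.mem_erase.mp hi).1 (Subtype.ext h)
        rw [Function.update_of_ne hne]
      · show natToPoly (Function.update g d g' d) * natToPoly (k d hd) = natToPoly g' * c
        rw [Function.update_self, hc]
    obtain ⟨g0, hg0mem, hiff⟩ := exists_unique_solution hf hdeg A c hc0 hcd
    have step1 : ∀ g' ∈ Finset.range (2 ^ m),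
        (if f ∣ ∑ i ∈ u.attach, natToPoly (Function.update g d g' i.1) * natToPoly (k i.1 i.2)
          then (1 : ℝ) / 2 ^ (∑ i ∈ u.attach, mu (k i.1 i.2)) else 0)
        = if g' = g0 then (1 : ℝ) / 2 ^ (∑ i ∈ u.attach, mu (k i.1 i.2)) else 0 := by
      intro g' hg'
      rw [hsplit g']
      exact if_congr (hiff g' hg') rfl rfl
    rw [Finset.sum_congr rfl step1, Finset.sum_ite_eq' _ g0, if_pos hg0mem]
    rw [one_div, ← Finset.prod_pow_eq_pow_sum, ← Finset.prod_inv_distrib]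
    simp [one_div]
  rw [Finset.sum_congr rfl key,
    ← Finset.prod_sum u (fun _ => Finset.Icc 1 (2 ^ m - 1)) (fun _ j => (1 : ℝ) / 2 ^ (mu j))]
  have : ∀ i ∈ u, ∑ j ∈ Finset.Icc 1 (2 ^ m - 1), (1 : ℝ) / 2 ^ (mu j) = (m : ℝ) / 2 :=
    fun i _ => sum_mu m
  rw [Finset.prod_congr rfl this, Finset.prod_const]

lemma BcritN_update_eq (m : ℕ) (γ : Finset ℕ → ℝ) (a b : ℕ → ℝ) (f : Polynomial (ZMod 2))
    (d : ℕ) (g : ℕ → ℕ) (g' : ℕ) :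
    BcritN m γ a b f d (Function.update g d g') = BcritN m γ a b f d g := by
  rw [BcritN_eq, BcritN_eq]
  apply Finset.sum_congr rfl
  intro u hu
  have hd : d ∉ u := by
    simp only [Finset.mem_filter, Finset.mem_powerset] at hu
    intro h
    exact absurd (Finset.mem_range.mp (hu.1 h)) (lt_irrefl d)
  rw [innerS_update m f u g d g' hd]

theorem cbc_bound (s m : ℕ) (hs : 1 ≤ s) (hm : 1 ≤ m)
    (γ : Finset ℕ → ℝ) (hγ : ∀ u, 0 < γ u) (a b : ℕ → ℝ) (hab : ∀ i, a i < b i)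
    (f : Polynomial (ZMod 2)) (hf : Irreducible f) (hdeg : f.natDegree = m)
    (gstar : ℕ → ℕ) (hg0 : gstar 0 = 1) (hgG : ∀ i, i < s → gstar i < 2 ^ m)
    (hmin : ∀ d, 1 ≤ d → d < s → ∀ g' < 2 ^ m,
      BcritN m γ a b f (d + 1) gstar ≤ BcritN m γ a b f (d + 1) (Function.update gstar d g')) :
    ∀ d, 1 ≤ d → d ≤ s →
      BcritN m γ a b f d gstar ≤
        (1 / 2 ^ m) *
          ∑ u ∈ (Finset.range d).powerset.filter (fun u => u.Nonempty),
            γ u * ((m : ℝ) / 2) ^ u.card * ∏ i ∈ u, (b i - a i) := by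
  have hp : (0 : ℝ) < 2 ^ m := by positivity
  have Rnonneg : ∀ d : ℕ, 0 ≤ ∑ u ∈ (Finset.range d).powerset.filter (fun u => u.Nonempty),
      γ u * ((m : ℝ) / 2) ^ u.card * ∏ i ∈ u, (b i - a i) := by
    intro d
    apply Finset.sum_nonneg
    intro u _
    have h1 : (0:ℝ) ≤ ((m : ℝ) / 2) ^ u.card := by positivity
    have h2 : (0:ℝ) < ∏ i ∈ u, (b i - a i) :=
      Finset.prod_pos fun i _ => sub_pos.mpr (hab i)
    have := (hγ u).le
    positivity
  intro d hd1 hds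
  induction d, hd1 using Nat.le_induction with
  | base =>
    rw [Bcrit_one m γ a b f hf hdeg gstar hg0]
    exact mul_nonneg (by positivity) (Rnonneg 1)
  | succ d hd ih =>
    have hds' : d < s := by omega
    have ihd := ih (by omega)
    -- partition identity for any summand family
    have hpart : ∀ (t : Finset ℕ → ℝ),
        ∑ u ∈ (Finset.range (d+1)).powerset.filter (fun u => u.Nonempty), t u
        = (∑ u ∈ (Finset.range d).powerset.filter (fun u => u.Nonempty), t u)
          + ∑ u ∈ ((Finset.range (d+1)).powerset.filter (fun u => u.Nonempty)).filter
              (fun u => ¬ d ∉ u), t u := by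
      intro t
      rw [← Finset.sum_filter_add_sum_filter_not
        ((Finset.range (d+1)).powerset.filter (fun u => u.Nonempty)) (fun u => d ∉ u) t,
        filter_not_mem d]
    set S1 := ((Finset.range (d+1)).powerset.filter (fun u => u.Nonempty)).filter
      (fun u => ¬ d ∉ u) with hS1
    have hsplitB : ∀ g : ℕ → ℕ, BcritN m γ a b f (d+1) g
        = BcritN m γ a b f d g
          + ∑ u ∈ S1, γ u * (∏ i ∈ u, (b i - a i)) * innerS m f u g := by
      intro g
      rw [BcritN_eq m γ a b f (d+1) g, hpart, ← BcritN_eq]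
    -- averaging
    have havg : ∑ g' ∈ Finset.range (2 ^ m), BcritN m γ a b f (d+1) (Function.update gstar d g')
        = 2 ^ m * BcritN m γ a b f d gstar
          + ∑ u ∈ S1, γ u * (∏ i ∈ u, (b i - a i)) * ((m : ℝ) / 2) ^ u.card := by
      have h1 : ∀ g' ∈ Finset.range (2 ^ m),
          BcritN m γ a b f (d+1) (Function.update gstar d g')
          = BcritN m γ a b f d gstar
            + ∑ u ∈ S1, γ u * (∏ i ∈ u, (b i - a i)) * innerS m f u (Function.update gstar d g') := by
        intro g' _
        rw [hsplitB, BcritN_update_eq]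
      rw [Finset.sum_congr rfl h1, Finset.sum_add_distrib, Finset.sum_const, Finset.card_range,
        nsmul_eq_mul, Finset.sum_comm]
      congr 1
      · push_cast; ring
      apply Finset.sum_congr rfl
      intro u hu
      have hdmem : d ∈ u := not_not.mp (Finset.mem_filter.mp hu).2
      rw [← Finset.mul_sum, avg_lemma hf hdeg u d hdmem gstar]
    -- minimality
    have hmin' : (2 ^ m : ℝ) * BcritN m γ a b f (d+1) gstar
        ≤ ∑ g' ∈ Finset.range (2 ^ m), BcritN m γ a b f (d+1) (Function.update gstar d g') := by
      have := Finset.card_nsmul_le_sum (Finset.range (2 ^ m))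
        (fun g' => BcritN m γ a b f (d+1) (Function.update gstar d g'))
        (BcritN m γ a b f (d+1) gstar)
        (fun g' hg' => hmin d hd hds' g' (Finset.mem_range.mp hg'))
      rw [Finset.card_range, nsmul_eq_mul] at this
      exact_mod_cast this
    rw [havg] at hmin'
    -- rewrite target sum
    have htgt : ∑ u ∈ (Finset.range (d+1)).powerset.filter (fun u => u.Nonempty),
        γ u * ((m : ℝ) / 2) ^ u.card * ∏ i ∈ u, (b i - a i)
        = (∑ u ∈ (Finset.range d).powerset.filter (fun u => u.Nonempty),
            γ u * ((m : ℝ) / 2) ^ u.card * ∏ i ∈ u, (b i - a i))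
          + ∑ u ∈ S1, γ u * (∏ i ∈ u, (b i - a i)) * ((m : ℝ) / 2) ^ u.card := by
      rw [hpart]
      congr 1
      apply Finset.sum_congr rfl
      intro u _
      ring
    rw [htgt]
    have h2m : (2 ^ m : ℝ) * ((1 / 2 ^ m) *
        ∑ u ∈ (Finset.range d).powerset.filter (fun u => u.Nonempty),
          γ u * ((m : ℝ) / 2) ^ u.card * ∏ i ∈ u, (b i - a i))
        = ∑ u ∈ (Finset.range d).powerset.filter (fun u => u.Nonempty),
          γ u * ((m : ℝ) / 2) ^ u.card * ∏ i ∈ u, (b i - a i) := by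
      field_simp
    set Rd := ∑ u ∈ (Finset.range d).powerset.filter (fun u => u.Nonempty),
      γ u * ((m : ℝ) / 2) ^ u.card * ∏ i ∈ u, (b i - a i) with hRd
    set T := ∑ u ∈ S1, γ u * (∏ i ∈ u, (b i - a i)) * ((m : ℝ) / 2) ^ u.card with hT
    have h3 : (2 ^ m : ℝ) * BcritN m γ a b f d gstar ≤ Rd := by
      have := mul_le_mul_of_nonneg_left ihd hp.le
      rw [h2m] at this
      exact this
    have h4 : (2 ^ m : ℝ) * BcritN m γ a b f (d+1) gstar ≤ Rd + T := by linarith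
    have h5 := mul_le_mul_of_nonneg_left h4 (by positivity : (0:ℝ) ≤ 1 / 2 ^ m)
    have h6 : (1 / 2 ^ m : ℝ) * ((2 ^ m : ℝ) * BcritN m γ a b f (d+1) gstar)
        = BcritN m γ a b f (d+1) gstar := by field_simp
    linarith
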